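/- Suppose that P is totally ramified in E and unramified in F'. Then [E F' : F'] = [E : F]; equivalently, E/F and F'/F are linearly disjoint. -/

import Mathlib

set_option synthInstance.maxHeartbeats 400000
set_option maxHeartbeats 1000000

noncomputable section

open IsLocalRing

section Aux

open Ideal

variable (O F E F' K : Type*)
  [CommRing O] [IsDomain O] [IsDiscreteValuationRing O]
  [Field F] [Field E] [Field F'] [Field K]
  [Algebra O F] [IsFractionRing O F]
  [Algebra F E] [Algebra F F'] [Algebra F K] [Algebra E K] [Algebra F' K]
  [IsScalarTower F E K] [IsScalarTower F F' K]
  [Algebra O E] [Algebra O F'] [Algebra O K]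
  [IsScalarTower O F E] [IsScalarTower O F F'] [IsScalarTower O F K]
  [IsScalarTower O E K] [IsScalarTower O F' K]
  [FiniteDimensional F E] [Algebra.IsSeparable F E]
  [FiniteDimensional F F'] [Algebra.IsSeparable F F']
  [FiniteDimensional F K] [Algebra.IsSeparable F K]

theorem key_aux
    (htotE : ∀ Q : Ideal (integralClosure O E), Q.IsMaximal →
        Ideal.ramificationIdx' (maximalIdeal O) Q
          = Module.finrank F E)
    (hunrF' : ∀ Q' : Ideal (integralClosure O F'), Q'.IsMaximal →
      Ideal.ramificationIdx' (maximalIdeal O) Q' = 1)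
    (hle : Module.finrank F' K ≤ Module.finrank F E) :
    Module.finrank F' K = Module.finrank F E := by
  haveI : IsDedekindDomain O := inferInstance
  haveI : FiniteDimensional F' K := FiniteDimensional.right F F' K
  haveI : IsDedekindDomain (integralClosure O E) := integralClosure.isDedekindDomain O F E
  haveI : IsDedekindDomain (integralClosure O F') := integralClosure.isDedekindDomain O F F'
  haveI : IsDedekindDomain (integralClosure O K) := integralClosure.isDedekindDomain O F K
  haveI : IsFractionRing (integralClosure O F') F' :=
    integralClosure.isFractionRing_of_finite_extension (A := O) F F'
  haveI : IsFractionRing (integralClosure O K) K :=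
    integralClosure.isFractionRing_of_finite_extension (A := O) F K
  haveI : Module.Finite O (integralClosure O E) := IsIntegralClosure.finite O F E _
  haveI : Module.Finite O (integralClosure O F') := IsIntegralClosure.finite O F F' _
  haveI : Module.Finite O (integralClosure O K) := IsIntegralClosure.finite O F K _
  -- injectivity facts
  have hOK : Function.Injective (algebraMap O K) := by
    rw [IsScalarTower.algebraMap_eq O F K]
    exact (algebraMap F K).injective.comp (IsFractionRing.injective O F)
  have hOE : Function.Injective (algebraMap O E) := by
    rw [IsScalarTower.algebraMap_eq O F E]
    exact (algebraMap F E).injective.comp (IsFractionRing.injective O F)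
  have hOF' : Function.Injective (algebraMap O F') := by
    rw [IsScalarTower.algebraMap_eq O F F']
    exact (algebraMap F F').injective.comp (IsFractionRing.injective O F)
  have hOT : Function.Injective (algebraMap O (integralClosure O K)) := fun a b h => by
    apply hOK
    rw [IsScalarTower.algebraMap_apply O (integralClosure O K) K, h,
      ← IsScalarTower.algebraMap_apply]
  have hOSE : Function.Injective (algebraMap O (integralClosure O E)) := fun a b h => by
    apply hOE
    rw [IsScalarTower.algebraMap_apply O (integralClosure O E) E, h,
      ← IsScalarTower.algebraMap_apply]
  have hOS' : Function.Injective (algebraMap O (integralClosure O F')) := fun a b h => by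
    apply hOF'
    rw [IsScalarTower.algebraMap_apply O (integralClosure O F') F', h,
      ← IsScalarTower.algebraMap_apply]
  -- algebra maps between integral closures
  let jE : integralClosure O E →ₐ[O] integralClosure O K :=
    ((IsScalarTower.toAlgHom O E K).comp (integralClosure O E).val).codRestrict
      (integralClosure O K) (fun x => IsIntegral.map (IsScalarTower.toAlgHom O E K) x.2)
  let jF : integralClosure O F' →ₐ[O] integralClosure O K :=
    ((IsScalarTower.toAlgHom O F' K).comp (integralClosure O F').val).codRestrict
      (integralClosure O K) (fun x => IsIntegral.map (IsScalarTower.toAlgHom O F' K) x.2)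
  letI : Algebra (integralClosure O E) (integralClosure O K) := jE.toRingHom.toAlgebra
  letI : Algebra (integralClosure O F') (integralClosure O K) := jF.toRingHom.toAlgebra
  haveI : IsScalarTower O (integralClosure O E) (integralClosure O K) :=
    IsScalarTower.of_algebraMap_eq fun x => (jE.commutes x).symm
  haveI : IsScalarTower O (integralClosure O F') (integralClosure O K) :=
    IsScalarTower.of_algebraMap_eq fun x => (jF.commutes x).symm
  haveI : IsScalarTower (integralClosure O F') (integralClosure O K) K :=
    IsScalarTower.of_algebraMap_eq fun x => rfl
  haveI : Module.Finite (integralClosure O E) (integralClosure O K) :=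
    Module.Finite.of_restrictScalars_finite O _ _
  haveI : Module.Finite (integralClosure O F') (integralClosure O K) :=
    Module.Finite.of_restrictScalars_finite O _ _
  haveI : Algebra.IsIntegral (integralClosure O E) (integralClosure O K) :=
    Algebra.IsIntegral.of_finite _ _
  haveI : Algebra.IsIntegral (integralClosure O F') (integralClosure O K) :=
    Algebra.IsIntegral.of_finite _ _
  haveI : Algebra.IsIntegral O (integralClosure O K) := Algebra.IsIntegral.of_finite _ _
  haveI : Algebra.IsIntegral O (integralClosure O E) := Algebra.IsIntegral.of_finite _ _
  haveI : Algebra.IsIntegral O (integralClosure O F') := Algebra.IsIntegral.of_finite _ _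
  -- a maximal ideal of the closure in K
  obtain ⟨Q, hQmax⟩ := Ideal.exists_maximal (integralClosure O K)
  haveI := hQmax
  have hOnf : ¬IsField O := IsDiscreteValuationRing.not_isField O
  have hTnf : ¬IsField (integralClosure O K) := fun hf =>
    hOnf ((Algebra.IsIntegral.isField_iff_isField hOT).mpr hf)
  have hSEnf : ¬IsField (integralClosure O E) := fun hf =>
    hOnf ((Algebra.IsIntegral.isField_iff_isField hOSE).mpr hf)
  have hS'nf : ¬IsField (integralClosure O F') := fun hf =>
    hOnf ((Algebra.IsIntegral.isField_iff_isField hOS').mpr hf)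
  have hQne : Q ≠ ⊥ := Ring.ne_bot_of_isMaximal_of_not_isField hQmax hTnf
  set QE : Ideal (integralClosure O E) :=
    Ideal.comap (algebraMap (integralClosure O E) (integralClosure O K)) Q with hQE_def
  set Q' : Ideal (integralClosure O F') :=
    Ideal.comap (algebraMap (integralClosure O F') (integralClosure O K)) Q with hQ'_def
  haveI hQEmax : QE.IsMaximal := Ideal.isMaximal_comap_of_isIntegral_of_isMaximal Q
  haveI hQ'max : Q'.IsMaximal := Ideal.isMaximal_comap_of_isIntegral_of_isMaximal Q
  have hQEne : QE ≠ ⊥ := Ring.ne_bot_of_isMaximal_of_not_isField hQEmax hSEnf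
  have hQ'ne : Q' ≠ ⊥ := Ring.ne_bot_of_isMaximal_of_not_isField hQ'max hS'nf
  -- injectivity of maps between closures
  have hjE : Function.Injective (algebraMap (integralClosure O E) (integralClosure O K)) :=
    fun a b h => Subtype.ext ((algebraMap E K).injective (congrArg Subtype.val h))
  have hjF : Function.Injective (algebraMap (integralClosure O F') (integralClosure O K)) :=
    fun a b h => Subtype.ext ((algebraMap F' K).injective (congrArg Subtype.val h))
  have hmapQE : Ideal.map (algebraMap (integralClosure O E) (integralClosure O K)) QE ≠ ⊥ := by
    rw [Ne, Ideal.map_eq_bot_iff_of_injective hjE]; exact hQEne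
  have hmapQ' : Ideal.map (algebraMap (integralClosure O F') (integralClosure O K)) Q' ≠ ⊥ := by
    rw [Ne, Ideal.map_eq_bot_iff_of_injective hjF]; exact hQ'ne
  have hmapP : Ideal.map (algebraMap O (integralClosure O K)) (maximalIdeal O) ≠ ⊥ := by
    rw [Ne, Ideal.map_eq_bot_iff_of_injective hOT]
    exact IsDiscreteValuationRing.not_a_field O
  have hleQE : Ideal.map (algebraMap (integralClosure O E) (integralClosure O K)) QE ≤ Q :=
    Ideal.map_comap_le
  have hleQ' : Ideal.map (algebraMap (integralClosure O F') (integralClosure O K)) Q' ≤ Q :=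
    Ideal.map_comap_le
  -- multiplicativity of ramification
  have e_eq1 := Ideal.ramificationIdx'_algebra_tower (p := maximalIdeal O) (P := QE) (Q := Q)
    hmapQE hmapP hleQE
  have e_eq2 := Ideal.ramificationIdx'_algebra_tower (p := maximalIdeal O) (P := Q') (Q := Q)
    hmapQ' hmapP hleQ'
  rw [htotE QE hQEmax] at e_eq1
  rw [hunrF' Q' hQ'max, one_mul] at e_eq2
  have hne : Ideal.ramificationIdx' QE Q ≠ 0 :=
    Ideal.IsDedekindDomain.ramificationIdx'_ne_zero hmapQE inferInstance hleQE
  have lower : Module.finrank F E ≤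
      Ideal.ramificationIdx' (maximalIdeal O) Q := by
    rw [e_eq1]
    exact Nat.le_mul_of_pos_right _ (Nat.pos_of_ne_zero hne)
  -- upper bound via sum formula over F'
  haveI : Q.LiesOver Q' := ⟨rfl⟩
  have hsum := Ideal.sum_ramification_inertia (R := integralClosure O F')
    (S := integralClosure O K) (p := Q') F' K hQ'ne
  have hfpos := Ideal.inertiaDeg'_pos Q' Q
  classical
  have hQmem : Q ∈ (UniqueFactorizationMonoid.factors
      (Ideal.map (algebraMap (integralClosure O F') (integralClosure O K)) Q')).toFinset := by
    rw [Multiset.mem_toFinset, UniqueFactorizationMonoid.factors_eq_normalizedFactors,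
      Ideal.mem_normalizedFactors_iff hmapQ']
    exact ⟨inferInstance, hleQ'⟩
  have upper : Ideal.ramificationIdx' Q' Q ≤
      Module.finrank F' K :=
    le_trans (Nat.le_mul_of_pos_right _ hfpos)
      (le_of_le_of_eq (Finset.single_le_sum
        (f := fun P => Ideal.ramificationIdx' Q' P *
          Ideal.inertiaDeg' Q' P)
        (fun _ _ => Nat.zero_le _) hQmem) hsum)
  omega

end Aux

variable (O F Ω : Type*)
  [CommRing O] [IsDomain O] [IsDiscreteValuationRing O]
  [Field F] [Field Ω]
  [Algebra O F] [IsFractionRing O F]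
  [Algebra F Ω] [Algebra O Ω] [IsScalarTower O F Ω]

/-- Let `E` and `F'` be finite separable extensions of `F` inside a fixed
algebraic closure `Ω`, and let `P` be the place of `F` given by the maximal ideal of the
discrete valuation ring `O` with fraction field `F`.  If `P` is totally ramified in `E`
(exactly one place of `E` above `P`, with ramification index `[E : F]`) and unramified in `F'`
(all ramification indices `1`), then `[E F' : F'] = [E : F]`, i.e. `E/F` and `F'/F` are
linearly disjoint. -/
theorem totally_ramified_unramified_linearly_disjoint
    [IsAlgClosure F Ω]
    (E : IntermediateField F Ω) [FiniteDimensional F E] [Algebra.IsSeparable F E]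
    (F' : IntermediateField F Ω) [FiniteDimensional F F'] [Algebra.IsSeparable F F']
    (htotE : (∃! Q : Ideal (integralClosure O E), Q.IsMaximal) ∧
      ∀ Q : Ideal (integralClosure O E), Q.IsMaximal →
        Ideal.ramificationIdx' (maximalIdeal O) Q
          = Module.finrank F E)
    (hunrF' : ∀ Q' : Ideal (integralClosure O F'), Q'.IsMaximal →
      Ideal.ramificationIdx' (maximalIdeal O) Q' = 1) :
    Module.finrank F' (IntermediateField.extendScalars (le_sup_right : F' ≤ E ⊔ F'))
      = Module.finrank F E := by

  haveI t1 : IsScalarTower O ↥F' Ω := IsScalarTower.of_algebraMap_eq fun x => rfl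
  haveI t1E : IsScalarTower O ↥E Ω := IsScalarTower.of_algebraMap_eq fun x => rfl
  letI K := IntermediateField.extendScalars (le_sup_right : F' ≤ E ⊔ F')
  letI e0 : ↥(E ⊔ F') ≃+* ↥K :=
    { toFun := fun x => ⟨x.1, x.2⟩
      invFun := fun x => ⟨x.1, x.2⟩
      left_inv := fun _ => rfl
      right_inv := fun _ => rfl
      map_mul' := fun _ _ => rfl
      map_add' := fun _ _ => rfl }
  letI aFK : Algebra F ↥K :=
    ((e0 : ↥(E ⊔ F') →+* ↥K).comp (algebraMap F ↥(E ⊔ F'))).toAlgebra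
  letI aOK : Algebra O ↥K :=
    ((e0 : ↥(E ⊔ F') →+* ↥K).comp (algebraMap O ↥(E ⊔ F'))).toAlgebra
  letI aEK : Algebra ↥E ↥K :=
    ((e0 : ↥(E ⊔ F') →+* ↥K).comp
      (IntermediateField.inclusion (le_sup_left : E ≤ E ⊔ F')).toRingHom).toAlgebra
  letI mFK : Module F ↥K := Algebra.toModule
  letI eqv : ↥(E ⊔ F') ≃ₐ[F] ↥K := { e0 with commutes' := fun _ => rfl }
  have hcoeK : ∀ y : ↥(E ⊔ F'), ((e0 y : ↥K) : Ω) = (y : Ω) := fun _ => rfl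
  haveI t2 : IsScalarTower F ↥E ↥K := IsScalarTower.of_algebraMap_eq fun x => by
    show e0 _ = e0 _
    exact congrArg e0 (by apply Subtype.ext; simp)
  haveI t3 : IsScalarTower O ↥E ↥K := IsScalarTower.of_algebraMap_eq fun x => by
    show e0 _ = e0 _
    refine congrArg e0 (Subtype.ext ?_)
    simp [IsScalarTower.algebraMap_apply O ↥E Ω]
  haveI t4 : IsScalarTower O F ↥K := IsScalarTower.of_algebraMap_eq fun x => by
    show e0 _ = e0 _
    exact congrArg e0 (IsScalarTower.algebraMap_apply O F ↥(E ⊔ F') x)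
  haveI i3 : IsScalarTower O ↥F' ↥K := IsScalarTower.of_algebraMap_eq fun x => by
    apply Subtype.ext
    show ((algebraMap O ↥(E ⊔ F') x : ↥(E ⊔ F')) : Ω) = _
    exact IsScalarTower.algebraMap_apply O ↥F' Ω x
  haveI i4 : IsScalarTower F ↥F' ↥K := IsScalarTower.of_algebraMap_eq fun x => by
    apply Subtype.ext
    show ((algebraMap F ↥(E ⊔ F') x : ↥(E ⊔ F')) : Ω) = _
    exact IsScalarTower.algebraMap_apply F ↥F' Ω x
  haveI f1 : FiniteDimensional F ↥K := Module.Finite.equiv eqv.toLinearEquiv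
  haveI f2 : Algebra.IsSeparable F ↥K :=
    Algebra.IsSeparable.of_algHom F ↥(E ⊔ F') eqv.symm.toAlgHom
  have hrank : Module.finrank F ↥K = Module.finrank F ↥(E ⊔ F') :=
    eqv.toLinearEquiv.finrank_eq.symm
  have hmul : Module.finrank F ↥F' * Module.finrank ↥F' ↥K = Module.finrank F ↥K :=
    Module.finrank_mul_finrank F ↥F' ↥K
  have hsup : Module.finrank F ↥(E ⊔ F') ≤ Module.finrank F ↥E * Module.finrank F ↥F' :=
    IntermediateField.finrank_sup_le E F'
  have hle : Module.finrank ↥F' ↥K ≤ Module.finrank F ↥E := by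
    have hpos : 0 < Module.finrank F ↥F' := Module.finrank_pos
    have h : Module.finrank F ↥F' * Module.finrank ↥F' ↥K ≤
        Module.finrank F ↥F' * Module.finrank F ↥E := by
      rw [hmul, hrank]
      calc Module.finrank F ↥(E ⊔ F') ≤ Module.finrank F ↥E * Module.finrank F ↥F' := hsup
        _ = Module.finrank F ↥F' * Module.finrank F ↥E := Nat.mul_comm _ _
    exact Nat.le_of_mul_le_mul_left h hpos
  exact key_aux O F ↥E ↥F' ↥K htotE.2 hunrF' hle
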